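/- For θ = π/4 the limit density of the half-line quantum walk takes the explicit form: ∫_0^{1/√2} 2/(π(1-y²)√(1-2y²)) dy = 1, i.e. the function y ↦ 2/(π(1-y²)√(1-2y²)) is a probability density on [0, 1/√2). -/

import Mathlib

open MeasureTheory Real Filter Set

noncomputable def halfC : ℝ := 1 / Real.sqrt 2
noncomputable def halfF (y : ℝ) : ℝ := (2 / Real.pi) * Real.arctan (y / Real.sqrt (1 - 2 * y ^ 2))
noncomputable def halfD (y : ℝ) : ℝ := 2 / (Real.pi * (1 - y ^ 2) * Real.sqrt (1 - 2 * y ^ 2))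

lemma halfC_pos : 0 < halfC := by
  unfold halfC; positivity

lemma halfC_sq : halfC ^ 2 = 1 / 2 := by
  unfold halfC
  rw [div_pow, one_pow, sq_sqrt (by norm_num : (2:ℝ) ≥ 0)]

lemma sq_lt_of_lt_halfC {x : ℝ} (h0 : 0 ≤ x) (h1 : x < halfC) : 2 * x ^ 2 < 1 := by
  have hc := halfC_sq
  nlinarith [halfC_pos]

lemma halfF_hasDeriv {x : ℝ} (h : 2 * x ^ 2 < 1) : HasDerivAt halfF (halfD x) x := by
  have hs : (0:ℝ) < 1 - 2 * x ^ 2 := by linarith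
  have hsq : 0 < Real.sqrt (1 - 2 * x ^ 2) := Real.sqrt_pos.mpr hs
  have hx1 : x ^ 2 < 1 := by nlinarith
  -- derivative of inner u x = 1 - 2 x^2
  have hu : HasDerivAt (fun y : ℝ => 1 - 2 * y ^ 2) (-(4 * x)) x := by
    have := ((hasDerivAt_pow 2 x).const_mul (2:ℝ)).const_sub (1:ℝ)
    exact this.congr_deriv (by ring)
  have hsqrt : HasDerivAt (fun y : ℝ => Real.sqrt (1 - 2 * y ^ 2))
      (-(4 * x) / (2 * Real.sqrt (1 - 2 * x ^ 2))) x := by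
    have := (Real.hasDerivAt_sqrt (ne_of_gt hs)).comp x hu
    exact this.congr_deriv (by ring)
  have hg : HasDerivAt (fun y : ℝ => y / Real.sqrt (1 - 2 * y ^ 2))
      ((1 * Real.sqrt (1 - 2 * x ^ 2) - x * (-(4 * x) / (2 * Real.sqrt (1 - 2 * x ^ 2)))) /
        (Real.sqrt (1 - 2 * x ^ 2)) ^ 2) x :=
    (hasDerivAt_id x).div hsqrt (ne_of_gt hsq)
  have harct := (Real.hasDerivAt_arctan (x / Real.sqrt (1 - 2 * x ^ 2))).comp x hg
  have hFd := harct.const_mul (2 / Real.pi)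
  refine hFd.congr_deriv (Eq.symm ?_)
  have hss : Real.sqrt (1 - 2 * x ^ 2) ^ 2 = 1 - 2 * x ^ 2 := Real.sq_sqrt hs.le
  unfold halfD
  have h1x : (0:ℝ) < 1 - x ^ 2 := by nlinarith
  have hpi := Real.pi_pos
  set s := Real.sqrt (1 - 2 * x ^ 2) with hsdef
  have hsne : s ≠ 0 := ne_of_gt hsq
  have e1 : 1 * s - x * (-(4 * x) / (2 * s)) = 1 / s := by
    field_simp
    linear_combination 2 * hss
  have e2 : 1 + (x / s) ^ 2 = (1 - x ^ 2) / s ^ 2 := by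
    rw [div_pow]
    field_simp
    linear_combination hss
  rw [e1, e2]
  field_simp

lemma halfD_nonneg (y : ℝ) : 0 ≤ halfD y := by
  unfold halfD
  rcases le_or_gt (1 - 2 * y ^ 2) 0 with h | h
  · rw [Real.sqrt_eq_zero_of_nonpos h, mul_zero, div_zero]
  · have h1 : (0:ℝ) < 1 - y ^ 2 := by nlinarith
    have hpi := Real.pi_pos
    have hsq : 0 < Real.sqrt (1 - 2 * y ^ 2) := Real.sqrt_pos.mpr h
    positivity

lemma halfD_contOn {b : ℝ} (hb0 : 0 ≤ b) (hb : b < halfC) :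
    ContinuousOn halfD (Set.Icc 0 b) := by
  apply ContinuousOn.div continuousOn_const
  · exact (continuousOn_const.mul ((continuousOn_const.sub (continuousOn_pow 2)))).mul
      (Real.continuous_sqrt.comp_continuousOn (by fun_prop))
  · intro x hx
    have h : 2 * x ^ 2 < 1 := sq_lt_of_lt_halfC hx.1 (lt_of_le_of_lt hx.2 hb)
    have h1 : (0:ℝ) < 1 - x ^ 2 := by nlinarith
    have hpi := Real.pi_pos
    have hsq : 0 < Real.sqrt (1 - 2 * x ^ 2) := Real.sqrt_pos.mpr (by linarith)
    exact ne_of_gt (by positivity)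

lemma halfD_integral_Ioo {b : ℝ} (hb0 : 0 ≤ b) (hb : b < halfC) :
    ∫ y in Set.Ioo 0 b, halfD y = halfF b := by
  have key : ∫ y in (0:ℝ)..b, halfD y = halfF b - halfF 0 := by
    apply intervalIntegral.integral_eq_sub_of_hasDerivAt
    · intro x hx
      rw [Set.uIcc_of_le hb0] at hx
      exact halfF_hasDeriv (sq_lt_of_lt_halfC hx.1 (lt_of_le_of_lt hx.2 hb))
    · exact (halfD_contOn hb0 hb).intervalIntegrable_of_Icc hb0
  have hF0 : halfF 0 = 0 := by
    unfold halfF; simp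
  rw [intervalIntegral.integral_of_le hb0, MeasureTheory.integral_Ioc_eq_integral_Ioo] at key
  rw [key, hF0, sub_zero]

lemma halfF_tendsto : Tendsto halfF (nhdsWithin halfC (Set.Iio halfC)) (nhds 1) := by
  have hmem : Set.Ioo 0 halfC ∈ nhdsWithin halfC (Set.Iio halfC) := by
    rw [mem_nhdsWithin_iff_exists_mem_nhds_inter]
    exact ⟨Set.Ioi 0, Ioi_mem_nhds halfC_pos, fun x hx => ⟨hx.1, hx.2⟩⟩
  have hsq : Tendsto (fun y : ℝ => Real.sqrt (1 - 2 * y ^ 2))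
      (nhdsWithin halfC (Set.Iio halfC)) (nhdsWithin 0 (Set.Ioi 0)) := by
    rw [tendsto_nhdsWithin_iff]
    constructor
    · have : Real.sqrt (1 - 2 * halfC ^ 2) = 0 := by
        rw [halfC_sq]; norm_num
      have hcont : Continuous (fun y : ℝ => Real.sqrt (1 - 2 * y ^ 2)) := by fun_prop
      have := hcont.continuousAt (x := halfC) |>.tendsto
      rw [show Real.sqrt (1 - 2 * halfC ^ 2) = 0 from by rw [halfC_sq]; norm_num] at this
      exact this.mono_left nhdsWithin_le_nhds
    · filter_upwards [hmem] with y hy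
      exact Real.sqrt_pos.mpr (by have := sq_lt_of_lt_halfC hy.1.le hy.2; linarith)
  have hginv : Tendsto (fun y : ℝ => (Real.sqrt (1 - 2 * y ^ 2))⁻¹)
      (nhdsWithin halfC (Set.Iio halfC)) atTop := tendsto_inv_nhdsGT_zero.comp hsq
  have hnum : Tendsto (fun y : ℝ => y) (nhdsWithin halfC (Set.Iio halfC)) (nhds halfC) :=
    tendsto_id.mono_left nhdsWithin_le_nhds
  have hg : Tendsto (fun y : ℝ => y / Real.sqrt (1 - 2 * y ^ 2))
      (nhdsWithin halfC (Set.Iio halfC)) atTop := by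
    simp only [div_eq_mul_inv]
    exact hnum.pos_mul_atTop halfC_pos hginv
  have harc : Tendsto (fun y : ℝ => Real.arctan (y / Real.sqrt (1 - 2 * y ^ 2)))
      (nhdsWithin halfC (Set.Iio halfC)) (nhds (Real.pi / 2)) :=
    (Real.tendsto_arctan_atTop.mono_right nhdsWithin_le_nhds).comp hg
  have := harc.const_mul (2 / Real.pi)
  have hpi := Real.pi_ne_zero
  have : Tendsto halfF (nhdsWithin halfC (Set.Iio halfC)) (nhds (2 / Real.pi * (Real.pi / 2))) := this
  rwa [show 2 / Real.pi * (Real.pi / 2) = 1 by field_simp] at this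

theorem hadamard_half_line_density_integral :
    ∫ y in Set.Ico 0 (1 / Real.sqrt 2),
      2 / (Real.pi * (1 - y ^ 2) * Real.sqrt (1 - 2 * y ^ 2)) = 1 := by
  have hmain : ∫ y in Set.Ico 0 halfC, halfD y = 1 := by
    set bseq : ℕ → ℝ := fun n => halfC - halfC / (n + 1) with hbseq
    have hb0 : ∀ n, 0 ≤ bseq n := by
      intro n
      have h1 : halfC / ((n:ℝ) + 1) ≤ halfC := by
        apply div_le_self halfC_pos.le
        exact le_add_of_nonneg_left (Nat.cast_nonneg n)
      simp only [hbseq]; linarith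
    have hblt : ∀ n, bseq n < halfC := by
      intro n
      have : 0 < halfC / ((n:ℝ) + 1) := div_pos halfC_pos (by positivity)
      simp only [hbseq]; linarith
    have hbtend : Tendsto bseq atTop (nhds halfC) := by
      have h := tendsto_const_div_atTop_nhds_zero_nat halfC
      have h2 : Tendsto (fun n : ℕ => halfC / ((n:ℝ) + 1)) atTop (nhds 0) := by
        have : Tendsto (fun n : ℕ => ((n:ℝ) + 1)) atTop atTop :=
          tendsto_natCast_atTop_atTop.atTop_add tendsto_const_nhds
        exact Tendsto.div_atTop tendsto_const_nhds this
      simpa using tendsto_const_nhds.sub h2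
    have hcover : AECover (volume.restrict (Set.Ico 0 halfC)) atTop
        (fun n => Set.Ioo (0:ℝ) (bseq n)) :=
      aecover_Ico_of_Ioo tendsto_const_nhds hbtend
    have hsub : ∀ n, Set.Ioo (0:ℝ) (bseq n) ⊆ Set.Ico 0 halfC := fun n y hy =>
      ⟨hy.1.le, hy.2.trans (hblt n)⟩
    have hInt : ∀ n, IntegrableOn halfD (Set.Ioo (0:ℝ) (bseq n))
        (volume.restrict (Set.Ico 0 halfC)) := by
      intro n
      rw [IntegrableOn, Measure.restrict_restrict measurableSet_Ioo,
        Set.inter_eq_left.mpr (hsub n)]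
      exact ((halfD_contOn (hb0 n) (hblt n)).integrableOn_Icc).mono_set Set.Ioo_subset_Icc_self
    have hEq : ∀ n, ∫ y in Set.Ioo (0:ℝ) (bseq n), halfD y
        ∂(volume.restrict (Set.Ico 0 halfC)) = halfF (bseq n) := by
      intro n
      rw [Measure.restrict_restrict measurableSet_Ioo, Set.inter_eq_left.mpr (hsub n)]
      exact halfD_integral_Ioo (hb0 n) (hblt n)
    have hbtend' : Tendsto bseq atTop (nhdsWithin halfC (Set.Iio halfC)) := by
      rw [tendsto_nhdsWithin_iff]
      exact ⟨hbtend, Eventually.of_forall fun n => hblt n⟩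
    have htend : Tendsto (fun n => ∫ y in Set.Ioo (0:ℝ) (bseq n), halfD y
        ∂(volume.restrict (Set.Ico 0 halfC))) atTop (nhds 1) := by
      simp only [hEq]
      exact halfF_tendsto.comp hbtend'
    exact hcover.integral_eq_of_tendsto_of_nonneg_ae 1
      (Eventually.of_forall halfD_nonneg) hInt htend
  exact hmain
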